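/- arXiv:2602.04596 — 2 statements merged into one kernel-verified Lean document; each statement's English description precedes it below -/
import Mathlib

section
/- For all real α > 0 and β > 0, ∫₀¹ (log x) · x^{α−1} (1−x)^{β−1} dx = B(α,β) · (ψ(α) − ψ(α+β)), where ψ denotes the digamma function, i.e. ψ(s) is the derivative at s of the function s ↦ log Γ(s). Equivalently, if G is a random variable with the Beta(α,β) distribution then E[log G] = ψ(α) − ψ(α+β), and by symmetry E[log(1−G)] = ψ(β) − ψ(α+β). -/
/-- The digamma function `ψ(s)`, the derivative at `s` of `s ↦ log Γ(s)`. -/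
noncomputable def digamma (s : ℝ) : ℝ := deriv (fun u : ℝ => Real.log (Real.Gamma u)) s

open MeasureTheory Real Set intervalIntegral

lemma betaComplexEq {a b : ℝ} (x : ℝ) (hx : x ∈ Set.Ioc (0:ℝ) 1) :
    (x:ℂ) ^ ((a:ℂ) - 1) * ((1:ℂ) - x) ^ ((b:ℂ) - 1)
      = ((x ^ (a-1) * (1-x) ^ (b-1) : ℝ) : ℂ) := by
  have h1 : ((x ^ (a-1) : ℝ) : ℂ) = (x:ℂ) ^ ((a:ℂ) - 1) := by
    rw [Complex.ofReal_cpow hx.1.le]; push_cast; ring_nf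
  have h2 : (((1-x) ^ (b-1) : ℝ) : ℂ) = ((1:ℂ) - x) ^ ((b:ℂ) - 1) := by
    rw [Complex.ofReal_cpow (by linarith [hx.2] : (0:ℝ) ≤ 1 - x)]; push_cast; ring_nf
  rw [← h1, ← h2]; push_cast; ring

lemma betaIntegrable {a b : ℝ} (ha : 0 < a) (hb : 0 < b) :
    IntervalIntegrable (fun x : ℝ => x ^ (a-1) * (1-x) ^ (b-1)) volume 0 1 := by
  have h := Complex.betaIntegral_convergent (u := a) (v := b) (by simpa using ha) (by simpa using hb)
  rw [intervalIntegrable_iff_integrableOn_Ioc_of_le zero_le_one] at h ⊢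
  have := (Complex.reCLM.integrable_comp h)
  refine this.congr ?_
  filter_upwards [ae_restrict_mem measurableSet_Ioc] with x hx
  simp [Function.comp, betaComplexEq x hx]

lemma realBeta {a b : ℝ} (ha : 0 < a) (hb : 0 < b) :
    ∫ x in (0:ℝ)..1, x ^ (a-1) * (1-x) ^ (b-1)
      = Real.Gamma a * Real.Gamma b / Real.Gamma (a + b) := by
  have h := Complex.Gamma_mul_Gamma_eq_betaIntegral (s := a) (t := b)
    (by simpa using ha) (by simpa using hb)
  have hbeta : Complex.betaIntegral a b
      = ((∫ x in (0:ℝ)..1, x ^ (a-1) * (1-x) ^ (b-1) : ℝ) : ℂ) := by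
    rw [Complex.betaIntegral, ← intervalIntegral.integral_ofReal]
    refine intervalIntegral.integral_congr_ae ?_
    rw [Set.uIoc_of_le (zero_le_one (α := ℝ))]
    filter_upwards with x hx
    exact betaComplexEq x hx
  rw [hbeta, ← Complex.ofReal_add, Complex.Gamma_ofReal, Complex.Gamma_ofReal,
    Complex.Gamma_ofReal] at h
  have hne : Real.Gamma (a + b) ≠ 0 := (Real.Gamma_pos_of_pos (by linarith)).ne'
  have h' : Real.Gamma a * Real.Gamma b
      = Real.Gamma (a + b) * ∫ x in (0:ℝ)..1, x ^ (a-1) * (1-x) ^ (b-1) := by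
    exact_mod_cast h
  field_simp [hne] at h' ⊢
  linarith [h']

lemma neg_log_le {x δ : ℝ} (hx : 0 < x) (hδ : 0 < δ) : -Real.log x ≤ x ^ (-δ) / δ := by
  have h1 : Real.log (x ^ (-δ)) ≤ x ^ (-δ) - 1 :=
    Real.log_le_sub_one_of_pos (Real.rpow_pos_of_pos hx _)
  rw [Real.log_rpow hx] at h1
  have h2 : (0:ℝ) < x ^ (-δ) := Real.rpow_pos_of_pos hx _
  rw [le_div_iff₀ hδ]
  nlinarith

lemma hasDeriv_beta {α β : ℝ} (hα : 0 < α) (hβ : 0 < β) :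
    HasDerivAt (fun a : ℝ => ∫ x in (0:ℝ)..1, x ^ (a-1) * (1-x) ^ (β-1))
      (∫ x in (0:ℝ)..1, Real.log x * (x ^ (α-1) * (1-x) ^ (β-1))) α := by
  have hmeas : ∀ a : ℝ, AEStronglyMeasurable (fun x : ℝ => x ^ (a-1) * (1-x) ^ (β-1))
      (volume.restrict (Set.uIoc (0:ℝ) 1)) := by
    intro a
    exact (Measurable.aestronglyMeasurable (by fun_prop))
  have key := intervalIntegral.hasDerivAt_integral_of_dominated_loc_of_deriv_le
    (F := fun a x => x ^ (a-1) * (1-x) ^ (β-1))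
    (F' := fun a x => Real.log x * (x ^ (a-1) * (1-x) ^ (β-1)))
    (a := 0) (b := 1) (x₀ := α)
    (bound := fun x => (4/α) * (x ^ (α/4 - 1) * (1-x) ^ (β-1)))
    (Metric.ball_mem_nhds α (half_pos hα)) (Filter.Eventually.of_forall hmeas) (betaIntegrable hα hβ)
    (Measurable.aestronglyMeasurable (Real.measurable_log.mul (by fun_prop)))
    ?_ ((betaIntegrable (by positivity) hβ).const_mul (4/α)) ?_
  · exact key.2
  · refine Filter.Eventually.of_forall fun t ht a ha => ?_
    rw [Set.uIoc_of_le (zero_le_one (α := ℝ))] at ht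
    have ht0 : 0 < t := ht.1
    have ht1 : t ≤ 1 := ht.2
    have hlog : Real.log t ≤ 0 := Real.log_nonpos ht0.le ht1
    have h1t : (0:ℝ) ≤ (1-t) ^ (β-1) := Real.rpow_nonneg (by linarith) _
    rw [Real.norm_eq_abs, abs_mul, abs_mul, abs_of_nonneg (Real.rpow_nonneg ht0.le _),
      abs_of_nonneg h1t, abs_of_nonpos hlog]
    have hae : α/2 - 1 ≤ a - 1 := by
      rw [Metric.mem_ball, Real.dist_eq, abs_lt] at ha; linarith [ha.1]
    have hb1 : t ^ (a-1) ≤ t ^ (α/2 - 1) :=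
      Real.rpow_le_rpow_of_exponent_ge ht0 ht1 hae
    have hb2 : -Real.log t ≤ t ^ (-(α/4)) / (α/4) := neg_log_le ht0 (by positivity)
    have hb3 : -Real.log t * t ^ (a-1) ≤ (4/α) * t ^ (α/4 - 1) := by
      calc -Real.log t * t ^ (a-1) ≤ (t ^ (-(α/4)) / (α/4)) * t ^ (α/2 - 1) := by
            apply mul_le_mul hb2 hb1 (Real.rpow_nonneg ht0.le _)
              (by positivity)
        _ = (4/α) * t ^ (α/4 - 1) := by
            rw [div_mul_eq_mul_div, ← Real.rpow_add ht0]
            ring_nf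
    calc -Real.log t * (t ^ (a-1) * (1-t) ^ (β-1))
        = (-Real.log t * t ^ (a-1)) * (1-t) ^ (β-1) := by ring
      _ ≤ ((4/α) * t ^ (α/4 - 1)) * (1-t) ^ (β-1) := mul_le_mul_of_nonneg_right hb3 h1t
      _ = (4/α) * (t ^ (α/4 - 1) * (1-t) ^ (β-1)) := by ring
  · refine Filter.Eventually.of_forall fun t ht a _ => ?_
    rw [Set.uIoc_of_le (zero_le_one (α := ℝ))] at ht
    have h := ((Real.hasStrictDerivAt_const_rpow ht.1 (a-1)).hasDerivAt.comp a
      ((hasDerivAt_id a).sub_const 1)).mul_const ((1-t) ^ (β-1))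
    refine h.congr_deriv ?_
    ring

lemma gamma_ne_neg_nat {s : ℝ} (hs : 0 < s) : ∀ m : ℕ, s ≠ -m := by
  intro m h
  have : (0:ℝ) ≤ (m:ℝ) := Nat.cast_nonneg m
  rw [h] at hs; linarith

lemma digamma_eq {s : ℝ} (hs : 0 < s) :
    digamma s = deriv Real.Gamma s / Real.Gamma s := by
  have hd : HasDerivAt Real.Gamma (deriv Real.Gamma s) s :=
    (Real.differentiableAt_Gamma (gamma_ne_neg_nat hs)).hasDerivAt
  have hpos := Real.Gamma_pos_of_pos hs
  have := hd.log hpos.ne'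
  exact this.deriv

lemma key_lemma {α β : ℝ} (hα : 0 < α) (hβ : 0 < β) :
    (∫ x in (0:ℝ)..1, Real.log x * (x ^ (α - 1) * (1 - x) ^ (β - 1))) =
      (Real.Gamma α * Real.Gamma β / Real.Gamma (α + β)) * (digamma α - digamma (α + β)) := by
  set s := α + β with hs
  have hspos : 0 < s := by positivity
  have hΓα := Real.Gamma_pos_of_pos hα
  have hΓβ := Real.Gamma_pos_of_pos hβ
  have hΓs := Real.Gamma_pos_of_pos hspos
  -- derivative of the RHS closed form
  have hdα : HasDerivAt Real.Gamma (deriv Real.Gamma α) α :=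
    (Real.differentiableAt_Gamma (gamma_ne_neg_nat hα)).hasDerivAt
  have hds : HasDerivAt (fun a : ℝ => Real.Gamma (a + β)) (deriv Real.Gamma s) α := by
    have := ((Real.differentiableAt_Gamma (gamma_ne_neg_nat hspos)).hasDerivAt).comp α
      ((hasDerivAt_id α).add_const β)
    rw [mul_one] at this
    exact this
  have hR : HasDerivAt (fun a : ℝ => Real.Gamma a * Real.Gamma β / Real.Gamma (a + β))
      ((deriv Real.Gamma α * Real.Gamma β * Real.Gamma s
        - Real.Gamma α * Real.Gamma β * deriv Real.Gamma s) / (Real.Gamma s) ^ 2) α := by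
    exact (hdα.mul_const (Real.Gamma β)).div hds hΓs.ne'
  -- the integral function agrees with the closed form near α
  have hL := hasDeriv_beta hα hβ
  have hEq : (fun a : ℝ => ∫ x in (0:ℝ)..1, x ^ (a-1) * (1-x) ^ (β-1))
      =ᶠ[nhds α] (fun a : ℝ => Real.Gamma a * Real.Gamma β / Real.Gamma (a + β)) := by
    filter_upwards [eventually_gt_nhds hα] with a ha
    exact realBeta ha hβ
  have hR' : HasDerivAt (fun a : ℝ => ∫ x in (0:ℝ)..1, x ^ (a-1) * (1-x) ^ (β-1))
      ((deriv Real.Gamma α * Real.Gamma β * Real.Gamma s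
        - Real.Gamma α * Real.Gamma β * deriv Real.Gamma s) / (Real.Gamma s) ^ 2) α :=
    hR.congr_of_eventuallyEq hEq
  have huniq := hL.unique hR'
  rw [huniq, digamma_eq hα, digamma_eq hspos]
  field_simp

/-- **Log-moments of the Beta distribution.**
For all real `α > 0` and `β > 0`,
`∫₀¹ (log x) x^(α−1)(1−x)^(β−1) dx = B(α,β) (ψ(α) − ψ(α+β))` where
`B(α,β) = Γ(α)Γ(β)/Γ(α+β)`; equivalently, if `G ∼ Beta(α,β)` then
`E[log G] = ψ(α) − ψ(α+β)`, and by symmetry `E[log (1−G)] = ψ(β) − ψ(α+β)`, i.e.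
`∫₀¹ (log (1−x)) x^(α−1)(1−x)^(β−1) dx = B(α,β) (ψ(β) − ψ(α+β))`. -/
theorem beta_log_moment (α β : ℝ) (hα : 0 < α) (hβ : 0 < β) :
    (∫ x in (0:ℝ)..1, Real.log x * (x ^ (α - 1) * (1 - x) ^ (β - 1))) =
      (Real.Gamma α * Real.Gamma β / Real.Gamma (α + β)) * (digamma α - digamma (α + β)) ∧
    (∫ x in (0:ℝ)..1, Real.log (1 - x) * (x ^ (α - 1) * (1 - x) ^ (β - 1))) =
      (Real.Gamma α * Real.Gamma β / Real.Gamma (α + β)) * (digamma β - digamma (α + β)) := by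
  refine ⟨key_lemma hα hβ, ?_⟩
  have hsub := intervalIntegral.integral_comp_sub_left
    (fun y : ℝ => Real.log y * (y ^ (β - 1) * (1 - y) ^ (α - 1))) 1 (a := 0) (b := 1)
  have h1 : (∫ x in (0:ℝ)..1, Real.log (1 - x) * (x ^ (α - 1) * (1 - x) ^ (β - 1)))
      = ∫ x in (0:ℝ)..1,
          Real.log (1-x) * ((1-x) ^ (β - 1) * (1 - (1-x)) ^ (α - 1)) := by
    refine intervalIntegral.integral_congr fun x _ => ?_
    have : (1:ℝ) - (1 - x) = x := by ring
    rw [this]; ring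
  rw [h1, hsub]
  norm_num
  rw [key_lemma hβ hα, add_comm β α, mul_comm (Real.Gamma β) (Real.Gamma α)]
end

section
/- Let α > 0 and β > 0 and let G be a random variable with the Beta(α,β) distribution. Let h(p) = −p log p − (1−p) log(1−p) be the binary entropy function (with h(0) = h(1) = 0). Then the expected entropy admits the closed form E[h(G)] = −(α/(α+β)) ψ(α+1) − (β/(α+β)) ψ(β+1) + ψ(α+β+1), where ψ denotes the digamma function, i.e. ψ(s) is the derivative at s of s ↦ log Γ(s). Equivalently, ∫₀¹ h(x) · x^{α−1}(1−x)^{β−1} dx / B(α,β) equals the stated expression. -/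
/-- The binary entropy function `h(p) = −p log p − (1−p) log (1−p)`
(with `h 0 = h 1 = 0`, automatic since `Real.log 0 = 0`). -/
noncomputable def binEntropy (p : ℝ) : ℝ := -(p * Real.log p) - (1 - p) * Real.log (1 - p)

section Aux

open MeasureTheory intervalIntegral Real Set Metric Filter

lemma integrable_beta {a b : ℝ} (ha : 0 < a) (hb : 0 < b) :
    IntegrableOn (fun x : ℝ => x ^ (a-1) * (1-x) ^ (b-1)) (Ioc 0 1) := by
  have h := Complex.betaIntegral_convergent (u := (a:ℂ)) (v := (b:ℂ))
    (by simpa using ha) (by simpa using hb)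
  rw [intervalIntegrable_iff_integrableOn_Ioc_of_le zero_le_one] at h
  have h2 : IntegrableOn (fun x : ℝ => ((x ^ (a-1) * (1-x) ^ (b-1) : ℝ) : ℂ)) (Ioc 0 1) := by
    refine h.congr ((ae_restrict_iff' measurableSet_Ioc).2 (Filter.Eventually.of_forall ?_))
    intro x hx
    push_cast [Complex.ofReal_cpow hx.1.le, Complex.ofReal_cpow (show (0:ℝ) ≤ 1 - x by linarith [hx.2])]
    ring
  have h3 := h2.re
  simp at h3
  exact h3

lemma beta_eq {a b : ℝ} (ha : 0 < a) (hb : 0 < b) :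
    ∫ x in Ioc (0:ℝ) 1, x ^ (a-1) * (1-x) ^ (b-1)
      = Real.Gamma a * Real.Gamma b / Real.Gamma (a+b) := by
  have h := Complex.Gamma_mul_Gamma_eq_betaIntegral (s := (a:ℂ)) (t := (b:ℂ))
    (by simpa using ha) (by simpa using hb)
  have hB : Complex.betaIntegral a b
      = ((∫ x in (0:ℝ)..1, x ^ (a-1) * (1-x) ^ (b-1) : ℝ) : ℂ) := by
    have h1 : Complex.betaIntegral a b
        = ∫ x in (0:ℝ)..1, ((x ^ (a-1) * (1-x) ^ (b-1) : ℝ) : ℂ) := by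
      refine intervalIntegral.integral_congr_ae (MeasureTheory.ae_of_all _ ?_)
      intro x hx
      rw [uIoc_of_le zero_le_one] at hx
      push_cast [Complex.ofReal_cpow hx.1.le, Complex.ofReal_cpow (show (0:ℝ) ≤ 1 - x by linarith [hx.2])]
      ring
    rw [h1]
    exact RCLike.intervalIntegral_ofReal
  rw [hB, ← Complex.ofReal_add, Complex.Gamma_ofReal, Complex.Gamma_ofReal,
    Complex.Gamma_ofReal, ← Complex.ofReal_mul, ← Complex.ofReal_mul] at h
  have h' := Complex.ofReal_inj.1 h
  rw [← intervalIntegral.integral_of_le zero_le_one]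
  rw [h']
  field_simp [(Real.Gamma_pos_of_pos (by linarith : (0:ℝ) < a + b)).ne']

lemma abs_log_le {x : ℝ} (hx : 0 < x) (hx1 : x ≤ 1) {t : ℝ} (ht : 0 < t) :
    |Real.log x| ≤ x ^ (-t) / t := by
  rw [abs_of_nonpos (Real.log_nonpos hx.le hx1)]
  have h := Real.log_le_rpow_div (x := x⁻¹) (by positivity) ht
  rw [Real.log_inv, Real.inv_rpow hx.le, ← Real.rpow_neg hx.le] at h
  linarith

lemma measurable_aux (c d : ℝ) :
    AEStronglyMeasurable (fun x : ℝ => x ^ c * Real.log x * (1-x) ^ d)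
      (volume.restrict (Ioc (0:ℝ) 1)) := by
  exact (((show Measurable fun x:ℝ => x ^ c by fun_prop).mul Real.measurable_log).mul
    (by fun_prop : Measurable fun x : ℝ => (1-x) ^ d)).aestronglyMeasurable

lemma hasDerivAt_beta {a b : ℝ} (ha : 0 < a) (hb : 0 < b) :
    Integrable (fun x => x ^ (a-1) * Real.log x * (1-x) ^ (b-1))
      (volume.restrict (Ioc (0:ℝ) 1)) ∧
    HasDerivAt (fun a' => ∫ x in Ioc (0:ℝ) 1, x ^ (a'-1) * (1-x) ^ (b-1))
      (∫ x in Ioc (0:ℝ) 1, x ^ (a-1) * Real.log x * (1-x) ^ (b-1)) a := by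
  have hε : (0:ℝ) < a/4 := by linarith
  refine hasDerivAt_integral_of_dominated_loc_of_deriv_le (s := ball a (a/4)) (ball_mem_nhds a hε)
    (F := fun a' x => x ^ (a'-1) * (1-x) ^ (b-1))
    (F' := fun a' x => x ^ (a'-1) * Real.log x * (1-x) ^ (b-1))
    (bound := fun x => (4/a) * (x ^ (a/2-1) * (1-x) ^ (b-1)))
    (Filter.Eventually.of_forall fun a' => Measurable.aestronglyMeasurable (by fun_prop))
    (integrable_beta ha hb) (measurable_aux _ _) ?_ ?_ ?_
  · refine (ae_restrict_iff' measurableSet_Ioc).2 (Filter.Eventually.of_forall ?_)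
    intro x hx a' ha'
    have hx0 := hx.1
    have hx1 := hx.2
    have h1x : (0:ℝ) ≤ 1 - x := by linarith
    rw [Real.norm_eq_abs, abs_mul, abs_mul, abs_of_nonneg (Real.rpow_nonneg hx0.le _),
      abs_of_nonneg (Real.rpow_nonneg h1x _)]
    have ha2 : a/2 - 1 + a/4 ≤ a' - 1 := by
      rw [mem_ball, Real.dist_eq, abs_lt] at ha'
      linarith [ha'.1]
    have e1 : x ^ (a'-1) ≤ x ^ (a/2 - 1 + a/4) :=
      Real.rpow_le_rpow_of_exponent_ge hx0 hx1 ha2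
    have e2 : |Real.log x| ≤ x ^ (-(a/4)) / (a/4) := abs_log_le hx0 hx1 hε
    calc x ^ (a'-1) * |Real.log x| * (1-x) ^ (b-1)
        ≤ (x ^ (a/2 - 1 + a/4) * (x ^ (-(a/4)) / (a/4))) * (1-x) ^ (b-1) := by
          gcongr
      _ = (4/a) * (x ^ (a/2-1) * (1-x) ^ (b-1)) := by
          rw [Real.rpow_add hx0, Real.rpow_neg hx0.le]
          have hxp : x ^ (a/4) ≠ 0 := (Real.rpow_pos_of_pos hx0 _).ne'
          field_simp
  · exact ((integrable_beta (by linarith : (0:ℝ) < a/2) hb).const_mul _)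
  · refine (ae_restrict_iff' measurableSet_Ioc).2 (Filter.Eventually.of_forall ?_)
    intro x hx a' _
    have hd : HasDerivAt (fun a' : ℝ => x ^ (a'-1)) (x ^ (a'-1) * Real.log x) a' := by
      have := (Real.hasStrictDerivAt_const_rpow hx.1 (a'-1)).hasDerivAt
      simpa [Function.comp_def] using this.comp a' ((hasDerivAt_id a').sub_const 1)
    simpa using hd.mul_const ((1-x) ^ (b-1))

lemma hasDerivAt_Gamma' {s : ℝ} (hs : 0 < s) :
    HasDerivAt Real.Gamma (Real.Gamma s * digamma s) s := by
  have hne : ∀ m : ℕ, s ≠ -m := by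
    intro m h
    have : (0:ℝ) ≤ m := Nat.cast_nonneg m
    rw [h] at hs; linarith
  have hd : DifferentiableAt ℝ Real.Gamma s := Real.differentiableAt_Gamma hne
  have hΓ : HasDerivAt Real.Gamma (deriv Real.Gamma s) s := hd.hasDerivAt
  have hpos := Real.Gamma_pos_of_pos hs
  have hlog : HasDerivAt (fun u : ℝ => Real.log (Real.Gamma u))
      (deriv Real.Gamma s / Real.Gamma s) s := hΓ.log hpos.ne'
  have : digamma s = deriv Real.Gamma s / Real.Gamma s := hlog.deriv
  rw [this, mul_div_cancel₀ _ hpos.ne']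
  exact hΓ

lemma hasDerivAt_G {a b : ℝ} (ha : 0 < a) (hb : 0 < b) :
    HasDerivAt (fun a' => Real.Gamma a' * Real.Gamma b / Real.Gamma (a' + b))
      (Real.Gamma a * Real.Gamma b / Real.Gamma (a+b) * (digamma a - digamma (a+b))) a := by
  have h1 := (hasDerivAt_Gamma' ha).mul_const (Real.Gamma b)
  have h2 : HasDerivAt (fun a' : ℝ => Real.Gamma (a' + b))
      (Real.Gamma (a+b) * digamma (a+b)) a := by
    have := (hasDerivAt_Gamma' (by linarith : 0 < a + b)).comp a ((hasDerivAt_id a).add_const b)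
    simpa [Function.comp_def] using this
  have hpos := Real.Gamma_pos_of_pos (by linarith : (0:ℝ) < a + b)
  have := h1.div h2 hpos.ne'
  refine HasDerivAt.congr_deriv this ?_
  field_simp

lemma integral_log_beta {a b : ℝ} (ha : 0 < a) (hb : 0 < b) :
    ∫ x in Ioc (0:ℝ) 1, x ^ (a-1) * Real.log x * (1-x) ^ (b-1)
      = Real.Gamma a * Real.Gamma b / Real.Gamma (a+b) * (digamma a - digamma (a+b)) := by
  have hF := (hasDerivAt_beta ha hb).2
  have hEq : (fun a' => ∫ x in Ioc (0:ℝ) 1, x ^ (a'-1) * (1-x) ^ (b-1))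
      =ᶠ[nhds a] (fun a' => Real.Gamma a' * Real.Gamma b / Real.Gamma (a' + b)) :=
    Filter.eventuallyEq_of_mem (Ioi_mem_nhds ha) (fun a' ha' => beta_eq ha' hb)
  have hG := (hasDerivAt_G ha hb).congr_of_eventuallyEq hEq
  exact hF.unique hG

lemma integral_log_beta' {a b : ℝ} (ha : 0 < a) (hb : 0 < b) :
    ∫ x in (0:ℝ)..1, x ^ (a-1) * Real.log x * (1-x) ^ (b-1)
      = Real.Gamma a * Real.Gamma b / Real.Gamma (a+b) * (digamma a - digamma (a+b)) := by
  rw [intervalIntegral.integral_of_le zero_le_one]; exact integral_log_beta ha hb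

lemma intInt_log {a b : ℝ} (ha : 0 < a) (hb : 0 < b) :
    IntervalIntegrable (fun x => x ^ (a-1) * Real.log x * (1-x) ^ (b-1)) volume 0 1 :=
  (intervalIntegrable_iff_integrableOn_Ioc_of_le zero_le_one).2 (hasDerivAt_beta ha hb).1

lemma intInt_log_one_sub {a b : ℝ} (ha : 0 < a) (hb : 0 < b) :
    IntervalIntegrable (fun x => x ^ (a-1) * Real.log (1-x) * (1-x) ^ (b-1)) volume 0 1 := by
  have h := ((intInt_log hb ha).comp_sub_left 1)
  simp only [sub_zero, sub_self, sub_sub_cancel] at h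
  have heq : (fun x : ℝ => x ^ (a-1) * Real.log (1-x) * (1-x) ^ (b-1))
      = fun x : ℝ => (1-x) ^ (b-1) * Real.log (1-x) * x ^ (a-1) := by
    funext x; ring
  rw [heq]
  exact h.symm

lemma integral_log_one_sub {a b : ℝ} (ha : 0 < a) (hb : 0 < b) :
    ∫ x in (0:ℝ)..1, x ^ (a-1) * Real.log (1-x) * (1-x) ^ (b-1)
      = Real.Gamma a * Real.Gamma b / Real.Gamma (a+b) * (digamma b - digamma (a+b)) := by
  have h := intervalIntegral.integral_comp_sub_left (a := 0) (b := 1)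
    (fun y : ℝ => y ^ (b-1) * Real.log y * (1-y) ^ (a-1)) 1
  simp only [sub_sub_cancel, sub_zero, sub_self] at h
  have h2 : (∫ x in (0:ℝ)..1, x ^ (a-1) * Real.log (1-x) * (1-x) ^ (b-1))
      = ∫ x in (0:ℝ)..1, (1-x) ^ (b-1) * Real.log (1-x) * x ^ (a-1) := by
    apply intervalIntegral.integral_congr
    intro x _
    simp only
    ring
  rw [h2, h, integral_log_beta' hb ha, mul_comm (Real.Gamma b) (Real.Gamma a), add_comm b a]


end Aux

/-- **Expected binary entropy under a Beta distribution.**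
For `α > 0`, `β > 0` and `G ∼ Beta(α,β)`,
`E[h(G)] = −(α/(α+β)) ψ(α+1) − (β/(α+β)) ψ(β+1) + ψ(α+β+1)`, i.e.
`∫₀¹ h(x) x^(α−1)(1−x)^(β−1) dx / B(α,β)` equals the stated expression, where
`B(α,β) = Γ(α)Γ(β)/Γ(α+β)` and `ψ` is the digamma function. -/
theorem beta_expected_entropy (α β : ℝ) (hα : 0 < α) (hβ : 0 < β) :
    (∫ x in (0:ℝ)..1, binEntropy x * (x ^ (α - 1) * (1 - x) ^ (β - 1))) /
      (Real.Gamma α * Real.Gamma β / Real.Gamma (α + β)) =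
      -(α / (α + β)) * digamma (α + 1) - (β / (α + β)) * digamma (β + 1) +
        digamma (α + β + 1) := by
  have hα1 : (0:ℝ) < α + 1 := by linarith
  have hβ1 : (0:ℝ) < β + 1 := by linarith
  have hI : (∫ x in (0:ℝ)..1, _root_.binEntropy x * (x ^ (α - 1) * (1 - x) ^ (β - 1)))
      = ∫ x in (0:ℝ)..1, (-(x ^ ((α+1)-1) * Real.log x * (1-x) ^ (β-1))
            + -(x ^ (α-1) * Real.log (1-x) * (1-x) ^ ((β+1)-1))) := by
    apply intervalIntegral.integral_congr
    intro x hx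
    rw [Set.uIcc_of_le zero_le_one] at hx
    simp only
    rcases eq_or_lt_of_le hx.1 with h0 | h0
    · simp [_root_.binEntropy, ← h0]
    rcases eq_or_lt_of_le hx.2 with h1 | h1
    · simp [_root_.binEntropy, h1]
    have e1 : x ^ ((α+1)-1) = x ^ (α-1) * x := by
      rw [show (α+1)-1 = (α-1)+1 by ring, Real.rpow_add_one h0.ne']
    have e2 : (1-x) ^ ((β+1)-1) = (1-x) ^ (β-1) * (1-x) := by
      rw [show (β+1)-1 = (β-1)+1 by ring,
        Real.rpow_add_one (by linarith : (1:ℝ) - x ≠ 0)]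
    rw [e1, e2, _root_.binEntropy]
    ring
  rw [hI, intervalIntegral.integral_add
      (show IntervalIntegrable (fun x : ℝ => -(x ^ ((α+1)-1) * Real.log x * (1-x) ^ (β-1))) MeasureTheory.volume 0 1
        from (intInt_log hα1 hβ).neg)
      (show IntervalIntegrable (fun x : ℝ => -(x ^ (α-1) * Real.log (1-x) * (1-x) ^ ((β+1)-1))) MeasureTheory.volume 0 1
        from (intInt_log_one_sub hα hβ1).neg),
    intervalIntegral.integral_neg, intervalIntegral.integral_neg,
    integral_log_beta' hα1 hβ, integral_log_one_sub hα hβ1,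
    show α + 1 + β = α + β + 1 by ring, show α + (β + 1) = α + β + 1 by ring,
    Real.Gamma_add_one hα.ne', Real.Gamma_add_one hβ.ne',
    show α + β + 1 = (α + β) + 1 by ring, Real.Gamma_add_one (by positivity : α + β ≠ 0)]
  have g1 := (Real.Gamma_pos_of_pos hα).ne'
  have g2 := (Real.Gamma_pos_of_pos hβ).ne'
  have g3 := (Real.Gamma_pos_of_pos (by linarith : (0:ℝ) < α + β)).ne'
  have g4 : α + β ≠ 0 := by positivity
  field_simp
  ring
end
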